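/- Extend d and r by setting d(p) := 1 and r(p) := 1. Then (p+1) + Σ_{0 ≤ i < j ≤ p} ( d(i)·r(j) − d(j)·r(i) ) = n(0). -/

import Mathlib

/-- Determinant of the `m × m` tridiagonal matrix with diagonal entries
`a 1, …, a m`, entries `-1` on the sub- and superdiagonal, and `0` elsewhere.
For `m = 0` (the empty sequence) this is `1`. -/
def tridiagDet (m : ℕ) (a : ℕ → ℤ) : ℤ :=
  Matrix.det (Matrix.of fun i j : Fin m =>
    if (i : ℕ) = (j : ℕ) then a ((i : ℕ) + 1)
    else if (i : ℕ) + 1 = (j : ℕ) ∨ (j : ℕ) + 1 = (i : ℕ) then -1 else 0)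

lemma coe_succAbove {n : ℕ} (q : Fin (n+1)) (i : Fin n) :
    ((q.succAbove i : Fin (n+1)) : ℕ) = if (i:ℕ) < (q:ℕ) then (i:ℕ) else (i:ℕ)+1 := by
  rw [Fin.succAbove]
  split_ifs with h h' h' <;> simp_all [Fin.lt_def]

lemma tridiagDet_succ_succ (m : ℕ) (a : ℕ → ℤ) :
    tridiagDet (m + 2) a
      = a 1 * tridiagDet (m + 1) (fun j => a (j + 1))
        - tridiagDet m (fun j => a (j + 2)) := by
  have hM1 : ((Matrix.of fun i j : Fin (m+2) =>
        if (i : ℕ) = (j : ℕ) then a ((i : ℕ) + 1)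
        else if (i : ℕ) + 1 = (j : ℕ) ∨ (j : ℕ) + 1 = (i : ℕ) then -1 else 0).submatrix
        Fin.succ (Fin.succAbove 0)).det = tridiagDet (m+1) (fun j => a (j + 1)) := by
    rw [tridiagDet]
    congr 1
    ext i j
    simp only [Matrix.submatrix_apply, Matrix.of_apply, coe_succAbove, Fin.val_succ,
      Fin.val_zero, Nat.not_lt_zero, if_false]
    split_ifs <;> first | rfl | omega
  have hM2 : ((Matrix.of fun i j : Fin (m+2) =>
        if (i : ℕ) = (j : ℕ) then a ((i : ℕ) + 1)
        else if (i : ℕ) + 1 = (j : ℕ) ∨ (j : ℕ) + 1 = (i : ℕ) then -1 else 0).submatrix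
        Fin.succ ((1 : Fin (m+2)).succAbove)).det = - tridiagDet m (fun j => a (j + 2)) := by
    rw [Matrix.det_succ_column_zero, Fin.sum_univ_succ]
    have hC : ((Matrix.of fun i j : Fin (m+2) =>
        if (i : ℕ) = (j : ℕ) then a ((i : ℕ) + 1)
        else if (i : ℕ) + 1 = (j : ℕ) ∨ (j : ℕ) + 1 = (i : ℕ) then -1 else 0).submatrix
        (Fin.succ ∘ Fin.succ) ((1 : Fin (m+2)).succAbove ∘ Fin.succ)).det
        = tridiagDet m (fun j => a (j + 2)) := by
      rw [tridiagDet]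
      congr 1
      ext i j
      simp only [Matrix.submatrix_apply, Matrix.of_apply, coe_succAbove, Fin.val_succ,
        Fin.val_zero, Fin.val_one, Function.comp_apply, add_lt_iff_neg_right, Nat.not_lt_zero, if_false]
      split_ifs <;> first | rfl | omega
    simp only [Matrix.submatrix_submatrix, Fin.succAbove_zero, Matrix.submatrix_apply,
      Matrix.of_apply, coe_succAbove, Fin.val_succ, Fin.val_zero, Fin.val_one, pow_zero, one_mul]
    norm_num
    rw [hC]
  rw [tridiagDet, Matrix.det_succ_row_zero, Fin.sum_univ_succ, Fin.sum_univ_succ]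
  simp only [Fin.succ_zero_eq_one]
  rw [hM1, hM2]
  simp only [Matrix.of_apply, Fin.val_zero, Fin.val_succ, Fin.val_one]
  norm_num
  ring

lemma tridiagDet_zero (a : ℕ → ℤ) : tridiagDet 0 a = 1 := by
  simp [tridiagDet]

lemma tridiagDet_one (a : ℕ → ℤ) : tridiagDet 1 a = a 1 := by
  simp [tridiagDet]

lemma tridiagDet_key : ∀ (m : ℕ) (a : ℕ → ℤ),
    tridiagDet (m + 1) a * tridiagDet (m + 1) (fun j => a (j + 1))
      - tridiagDet (m + 2) a * tridiagDet m (fun j => a (j + 1)) = 1 := by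
  intro m
  induction m with
  | zero =>
      intro a
      rw [tridiagDet_succ_succ, tridiagDet_one, tridiagDet_one, tridiagDet_zero, tridiagDet_zero]
      ring
  | succ k ih =>
      intro a
      have h1 := tridiagDet_succ_succ (k + 1) a
      have h2 := tridiagDet_succ_succ k a
      have h3 := ih (fun j => a (j + 1))
      have e : (fun j => a (j + 1 + 1)) = (fun j => a (j + 2)) := rfl
      rw [e] at h3
      show tridiagDet (k + 2) a * tridiagDet (k + 2) (fun j => a (j + 1))
        - tridiagDet (k + 3) a * tridiagDet (k + 1) (fun j => a (j + 1)) = 1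
      have h1' : tridiagDet (k + 3) a
          = a 1 * tridiagDet (k + 2) (fun j => a (j + 1))
            - tridiagDet (k + 1) (fun j => a (j + 2)) := h1
      linear_combination (tridiagDet (k + 2) (fun j => a (j + 1))) * h2
        - (tridiagDet (k + 1) (fun j => a (j + 1))) * h1' + h3

/-- `nn n p i = D(n 1, …, n (p - i))`: the numerator of the `(p-i)`-th convergent
(equal to `1` for `i = p`, matching the convention `n(p) = 1`). -/
def nn (n : ℕ → ℤ) (p i : ℕ) : ℤ := tridiagDet (p - i) n

/-- `kk n p i = D(n 2, …, n (p - i))` for `i < p`, and `kk n p p = 0`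
(the convention `k(p) = 0`). -/
def kk (n : ℕ → ℤ) (p i : ℕ) : ℤ :=
  if i = p then 0 else tridiagDet (p - i - 1) (fun j => n (j + 1))

/-- Lattice-area identity: extending `d` and `r` by `d(p) := 1`, `r(p) := 1`,
one has `(p+1) + Σ_(0 ≤ i < j ≤ p) (d(i)·r(j) - d(j)·r(i)) = n(0)`. -/
theorem dim_end_eq_n
    (p : ℕ) (hp : 1 ≤ p) (n : ℕ → ℤ) (hn : ∀ i, 1 ≤ i → i ≤ p → 2 ≤ n i)
    (d r : ℕ → ℤ)
    (hd : ∀ i < p, d i = nn n p i - nn n p (i + 1)) (hdp : d p = 1)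
    (hr : ∀ i < p, r i = kk n p i - kk n p (i + 1)) (hrp : r p = 1) :
    ((p : ℤ) + 1) + ∑ j ∈ Finset.range (p + 1), ∑ i ∈ Finset.range j,
      (d i * r j - d j * r i) = nn n p 0 := by
  have hNp : nn n p p = 1 := by
    rw [nn, Nat.sub_self, tridiagDet_zero]
  have hKp : kk n p p = 0 := by rw [kk, if_pos rfl]
  have key1 : ∀ j, j < p → nn n p (j+1) * kk n p j - nn n p j * kk n p (j+1) = 1 := by
    intro j hj
    by_cases h : j + 1 = p
    · have h1 : nn n p (j+1) = 1 := by rw [h, hNp]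
      have h2 : kk n p (j+1) = 0 := by rw [h, hKp]
      have h3 : kk n p j = 1 := by
        rw [kk, if_neg (by omega), show p - j - 1 = 0 by omega, tridiagDet_zero]
      rw [h1, h2, h3]; ring
    · obtain ⟨m, hm⟩ : ∃ m, m = p - j - 2 := ⟨_, rfl⟩
      have e4 : p - (j+1) - 1 = m := by omega
      have e1 : p - (j+1) = m + 1 := by omega
      have e2 : p - j - 1 = m + 1 := by omega
      have e3 : p - j = m + 2 := by omega
      rw [nn, nn, kk, kk, if_neg (by omega), if_neg (by omega), e4, e1, e2, e3]
      exact tridiagDet_key m n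
  have hsumd : ∀ j, j ≤ p → ∑ i ∈ Finset.range j, d i = nn n p 0 - nn n p j := by
    intro j hj
    have h : ∀ i ∈ Finset.range j, d i = nn n p i - nn n p (i+1) := fun i hi =>
      hd i (by have := Finset.mem_range.mp hi; omega)
    rw [Finset.sum_congr rfl h, Finset.sum_range_sub']
  have hsumr : ∀ j, j ≤ p → ∑ i ∈ Finset.range j, r i = kk n p 0 - kk n p j := by
    intro j hj
    have h : ∀ i ∈ Finset.range j, r i = kk n p i - kk n p (i+1) := fun i hi =>
      hr i (by have := Finset.mem_range.mp hi; omega)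
    rw [Finset.sum_congr rfl h, Finset.sum_range_sub']
  have houter : ∑ j ∈ Finset.range (p+1), ∑ i ∈ Finset.range j, (d i * r j - d j * r i)
      = ∑ j ∈ Finset.range (p+1),
        (nn n p 0 * r j - kk n p 0 * d j - (nn n p j * r j - kk n p j * d j)) := by
    refine Finset.sum_congr rfl fun j hj => ?_
    have hjp : j ≤ p := by have := Finset.mem_range.mp hj; omega
    rw [Finset.sum_sub_distrib, ← Finset.sum_mul, ← Finset.mul_sum, hsumd j hjp, hsumr j hjp]
    ring
  have hterm : ∀ j ∈ Finset.range (p+1), nn n p j * r j - kk n p j * d j = 1 := by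
    intro j hj
    rcases Nat.lt_or_ge j p with h | h
    · rw [hd j h, hr j h]
      linear_combination key1 j h
    · have hjp : j = p := by have := Finset.mem_range.mp hj; omega
      subst hjp
      rw [hNp, hKp, hdp, hrp]; ring
  have hrsum : ∑ j ∈ Finset.range (p+1), r j = kk n p 0 + 1 := by
    rw [Finset.sum_range_succ, hsumr p le_rfl, hrp, hKp]; ring
  have hdsum : ∑ j ∈ Finset.range (p+1), d j = nn n p 0 := by
    rw [Finset.sum_range_succ, hsumd p le_rfl, hdp, hNp]; ring
  rw [houter, Finset.sum_sub_distrib, Finset.sum_sub_distrib, ← Finset.mul_sum, ← Finset.mul_sum,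
    hrsum, hdsum, Finset.sum_congr rfl hterm, Finset.sum_const, Finset.card_range]
  ring
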